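/- For any graph G and any loop e of G, the contraction of e in the bicircular lift matroid equals the graphic (cycle) matroid of G \ e: L(G)/e = M(G \ e). -/

import Mathlib

open Finset

/-- A multigraph with vertex type `V`, edge-label type `α`, edge set `E`,
and an endpoints function assigning to each edge an unordered pair of vertices. -/
structure MGraph (V : Type) (α : Type) where
  E : Finset α
  ends : α → Sym2 V

namespace MGraph

variable {V V₁ V₂ : Type} {α : Type} [DecidableEq V] [DecidableEq V₁] [DecidableEq V₂]
  [DecidableEq α]

/-- `u` and `v` are joined by an edge of `X`. -/
def Adj (G : MGraph V α) (X : Finset α) (u v : V) : Prop :=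
  ∃ e ∈ X, G.ends e = s(u, v)

/-- `v` is incident with an edge of `X`. -/
def VIn (G : MGraph V α) (X : Finset α) (v : V) : Prop :=
  ∃ e ∈ X, v ∈ G.ends e

/-- The degree of `v` in the edge set `X` (loops count twice). -/
def degIn (G : MGraph V α) (X : Finset α) (v : V) : ℕ :=
  ∑ e ∈ X, (if G.ends e = s(v, v) then 2 else if v ∈ G.ends e then 1 else 0)

/-- `C` is the edge set of a cycle of `G`: a nonempty connected 2-regular subgraph. -/
def IsCycle (G : MGraph V α) (C : Finset α) : Prop :=
  C.Nonempty ∧ C ⊆ G.E ∧ (∀ v, G.VIn C v → G.degIn C v = 2) ∧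
    ∀ u v, G.VIn C u → G.VIn C v → Relation.ReflTransGen (G.Adj C) u v

/-- The subgraph on edge set `X` contains at least two (distinct) cycles. -/
def TwoCycles (G : MGraph V α) (X : Finset α) : Prop :=
  ∃ C₁ C₂ : Finset α, G.IsCycle C₁ ∧ G.IsCycle C₂ ∧ C₁ ⊆ X ∧ C₂ ⊆ X ∧ C₁ ≠ C₂

/-- `X` is a circuit of the bicircular lift matroid `L(G)`: a minimal edge set
containing at least two cycles. -/
def LiftCircuit (G : MGraph V α) (X : Finset α) : Prop :=
  X ⊆ G.E ∧ G.TwoCycles X ∧ ∀ Y ⊂ X, ¬ G.TwoCycles Y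

/-- `X` is independent in the bicircular lift matroid `L(G)`. -/
def LiftIndep (G : MGraph V α) (X : Finset α) : Prop :=
  X ⊆ G.E ∧ ∀ C ⊆ X, ¬ G.LiftCircuit C

/-- `L(G)` has at least two circuits. -/
def TwoLiftCircuits (G : MGraph V α) : Prop :=
  ∃ X Y : Finset α, G.LiftCircuit X ∧ G.LiftCircuit Y ∧ X ≠ Y

/-- Equality of the bicircular lift matroids `L(G₁) = L(G₂)` (equal ground sets
and equal circuit collections). -/
def LiftEq (G₁ : MGraph V₁ α) (G₂ : MGraph V₂ α) : Prop :=
  G₁.E = G₂.E ∧ ∀ X : Finset α, G₁.LiftCircuit X ↔ G₂.LiftCircuit X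

/-- `G₁` and `G₂` are 2-isomorphic, i.e. their graphic matroids on the common
edge set are equal (equivalently, they have the same cycles). -/
def TwoIso (G₁ : MGraph V₁ α) (G₂ : MGraph V₂ α) : Prop :=
  G₁.E = G₂.E ∧ ∀ X : Finset α, G₁.IsCycle X ↔ G₂.IsCycle X

/-- `G` has no loops. -/
def Loopless (G : MGraph V α) : Prop := ∀ e ∈ G.E, ¬ (G.ends e).IsDiag

/-- `G` is connected. -/
def Connected (G : MGraph V α) : Prop :=
  ∀ u v : V, Relation.ReflTransGen (G.Adj G.E) u v

/-- `G` is 2-edge-connected: every edge lies in a cycle. -/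
def TwoEdgeConnected (G : MGraph V α) : Prop :=
  ∀ e ∈ G.E, ∃ C : Finset α, G.IsCycle C ∧ e ∈ C

/-- `e` is a cut-edge of `G`: an edge contained in no cycle. -/
def IsCutEdge (G : MGraph V α) (e : α) : Prop :=
  e ∈ G.E ∧ ∀ C : Finset α, G.IsCycle C → e ∉ C

/-- Deletion of the edge `e` from `G`. -/
def delete (G : MGraph V α) (e : α) : MGraph V α :=
  ⟨G.E.erase e, G.ends⟩

/-- Restriction of `G` to the edge set `X`. -/
def restrict (G : MGraph V α) (X : Finset α) : MGraph V α :=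
  ⟨G.E ∩ X, G.ends⟩

/-- Contraction of the link `e` with endpoints `u, v`: the edge `e` is deleted
and the vertex `v` is identified with `u`. -/
def contractLink (G : MGraph V α) (e : α) (u v : V) : MGraph V α :=
  ⟨G.E.erase e, fun f => (G.ends f).map (fun w => if w = v then u else w)⟩

/-- `X` is a circuit of the contraction `M/e`, where `M` is the matroid with
circuit collection `Circ`: the circuits of `M/e` are the minimal nonempty sets of
the form `C \ {e}` with `C` a circuit of `M`. -/
def ContractCircuit (Circ : Finset α → Prop) (e : α) (X : Finset α) : Prop :=
  (X.Nonempty ∧ ∃ C : Finset α, Circ C ∧ X = C.erase e) ∧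
    ∀ Y ⊂ X, ¬ (Y.Nonempty ∧ ∃ C : Finset α, Circ C ∧ Y = C.erase e)

/-- `e` and `f` form a series pair: no cycle contains exactly one of them. -/
def SeriesPair (G : MGraph V α) (e f : α) : Prop :=
  e ∈ G.E ∧ f ∈ G.E ∧ ∀ C : Finset α, G.IsCycle C → (e ∈ C ↔ f ∈ C)

/-- `X` is a series class of `G`: a maximal set of pairwise series edges. -/
def SeriesClass (G : MGraph V α) (X : Finset α) : Prop :=
  X ⊆ G.E ∧ X.Nonempty ∧ (∀ e ∈ X, ∀ f ∈ X, G.SeriesPair e f) ∧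
    ∀ g ∈ G.E, (∀ e ∈ X, G.SeriesPair e g) → g ∈ X

/-- `G` is cosimple: no cut-edges and no nontrivial series classes. -/
def CoSimple (G : MGraph V α) : Prop :=
  (∀ e ∈ G.E, ¬ G.IsCutEdge e) ∧
    ∀ e ∈ G.E, ∀ f ∈ G.E, e ≠ f → ¬ G.SeriesPair e f

/-- `e` and `f` are parallel edges. -/
def Parallel (G : MGraph V α) (e f : α) : Prop :=
  e ≠ f ∧ G.IsCycle {e, f}

/-- `P` is a parallel class of `G`: a maximal set of pairwise parallel non-loop
edges. -/
def ParallelClass (G : MGraph V α) (P : Finset α) : Prop :=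
  P ⊆ G.E ∧ P.Nonempty ∧ (∀ e ∈ P, ¬ (G.ends e).IsDiag) ∧
    (∀ e ∈ P, ∀ f ∈ P, e ≠ f → G.Parallel e f) ∧
    ∀ g ∈ G.E, g ∉ P → ¬ (G.ends g).IsDiag → ∃ e ∈ P, ¬ G.Parallel e g

/-- `P` is the edge set of a path of `G`: nonempty, acyclic, connected, with all
degrees at most two. -/
def IsPath (G : MGraph V α) (P : Finset α) : Prop :=
  P.Nonempty ∧ P ⊆ G.E ∧ (∀ C ⊆ P, ¬ G.IsCycle C) ∧
    (∀ v, G.VIn P v → G.degIn P v ≤ 2) ∧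
    ∀ u v, G.VIn P u → G.VIn P v → Relation.ReflTransGen (G.Adj P) u v

/-- `P` is the edge set of a path of `G` with end-vertices `x` and `y`. -/
def PathBetween (G : MGraph V α) (P : Finset α) (x y : V) : Prop :=
  G.IsPath P ∧ x ≠ y ∧ G.degIn P x = 1 ∧ G.degIn P y = 1 ∧
    ∀ v, G.degIn P v = 1 → v = x ∨ v = y

/-- `P` is the edge set of an ear of `G`: a path contained in a cycle, whose
internal vertices have degree two in `G` and whose end-vertices have degree at
least three in `G`. -/
def IsEar (G : MGraph V α) (P : Finset α) : Prop :=
  G.IsPath P ∧ (∀ v, G.degIn P v = 2 → G.degIn G.E v = 2) ∧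
    (∀ v, G.degIn P v = 1 → 3 ≤ G.degIn G.E v) ∧
    ∃ C : Finset α, G.IsCycle C ∧ P ⊆ C

/-- `G` is a subdivision of `K_2^n`: two distinct branch vertices joined by `n`
internally disjoint paths whose edge sets partition `E(G)`. -/
def IsK2nSub (G : MGraph V α) (n : ℕ) : Prop :=
  ∃ x y : V, x ≠ y ∧ ∃ P : Fin n → Finset α,
    (G.E = Finset.univ.biUnion fun i => P i) ∧
    (∀ i j : Fin n, i ≠ j → Disjoint (P i) (P j)) ∧
    (∀ i : Fin n, G.PathBetween (P i) x y) ∧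
    (∀ i j : Fin n, i ≠ j → ∀ v, G.VIn (P i) v → G.VIn (P j) v → v = x ∨ v = y)

/-- `G` is a subdivision of `K_2^n` with the edge `e` lying on one of the `n`
paths. -/
def IsK2nSubThrough (G : MGraph V α) (n : ℕ) (e : α) : Prop :=
  ∃ x y : V, x ≠ y ∧ ∃ P : Fin n → Finset α,
    (G.E = Finset.univ.biUnion fun i => P i) ∧
    (∀ i j : Fin n, i ≠ j → Disjoint (P i) (P j)) ∧
    (∀ i : Fin n, G.PathBetween (P i) x y) ∧
    (∀ i j : Fin n, i ≠ j → ∀ v, G.VIn (P i) v → G.VIn (P j) v → v = x ∨ v = y) ∧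
    ∃ i : Fin n, e ∈ P i

/-- `T` is the edge set of a spanning tree of `G`. -/
def IsSpanningTree (G : MGraph V α) (T : Finset α) : Prop :=
  T ⊆ G.E ∧ (∀ C ⊆ T, ¬ G.IsCycle C) ∧
    ∀ u v : V, Relation.ReflTransGen (G.Adj T) u v

end MGraph


namespace MGraph

variable {V α : Type} [DecidableEq V] [DecidableEq α] {G : MGraph V α}

private lemma term_eq_zero_iff {v : V} {g : α} :
    (if G.ends g = s(v, v) then 2 else if v ∈ G.ends g then 1 else 0) = 0 ↔
      v ∉ G.ends g := by
  split_ifs with h1 h2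
  · simp only [OfNat.ofNat_ne_zero, false_iff, not_not]
    rw [h1]; exact Sym2.mem_mk_left v v
  · simp [h2]
  · simp [h2]

/-- In a cycle, from a vertex that carries a loop of the cycle, no other edge of
the cycle touches that vertex. -/
private lemma loop_vertex_isolated {C : Finset α} (hC : G.IsCycle C) {f : α} {w : V}
    (hfC : f ∈ C) (hf : G.ends f = s(w, w)) {g : α} (hgC : g ∈ C) (hgf : g ≠ f) :
    w ∉ G.ends g := by
  have hdeg : G.degIn C w = 2 := hC.2.2.1 w ⟨f, hfC, by rw [hf]; exact Sym2.mem_mk_left w w⟩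
  unfold degIn at hdeg
  rw [← Finset.add_sum_erase _ _ hfC, if_pos hf] at hdeg
  have hz : ∀ x ∈ C.erase f,
      (if G.ends x = s(w, w) then 2 else if w ∈ G.ends x then 1 else 0) = 0 := by
    rw [← Finset.sum_eq_zero_iff]
    omega
  exact term_eq_zero_iff.mp (hz g (Finset.mem_erase.mpr ⟨hgf, hgC⟩))

/-- The only cycle through a loop is the loop itself. -/
private lemma cycle_of_loop {C : Finset α} (hC : G.IsCycle C) {f : α} {w : V}
    (hfC : f ∈ C) (hf : G.ends f = s(w, w)) : C = {w ∈ C | True} ∧ C = {f} := by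
  refine ⟨by simp, ?_⟩
  -- every vertex reachable from w in C is w
  have hreach : ∀ z, Relation.ReflTransGen (G.Adj C) w z → z = w := by
    intro z hz
    induction hz with
    | refl => rfl
    | tail h hadj ih =>
      obtain ⟨g, hgC, hg⟩ := hadj
      subst ih
      by_cases hgf : g = f
      · subst hgf
        rw [hf] at hg
        have := Sym2.eq_iff.mp hg
        tauto
      · exact absurd (by rw [hg]; exact Sym2.mem_mk_left _ _)
          (loop_vertex_isolated hC hfC hf hgC hgf)
  ext g
  simp only [Finset.mem_singleton]
  constructor
  · intro hgC
    by_contra hgf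
    obtain ⟨a, b, hab⟩ : ∃ a b, G.ends g = s(a, b) := by
      induction G.ends g using Sym2.ind with
      | _ a b => exact ⟨a, b, rfl⟩
    have hwa : Relation.ReflTransGen (G.Adj C) w a :=
      hC.2.2.2 w a ⟨f, hfC, by rw [hf]; exact Sym2.mem_mk_left w w⟩
        ⟨g, hgC, by rw [hab]; exact Sym2.mem_mk_left a b⟩
    have haw := hreach a hwa
    subst haw
    exact loop_vertex_isolated hC hfC hf hgC hgf
      (by rw [hab]; exact Sym2.mem_mk_left a b)
  · rintro rfl; exact hfC

private lemma cycle_eq_loop {C : Finset α} (hC : G.IsCycle C) {f : α} {w : V}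
    (hfC : f ∈ C) (hf : G.ends f = s(w, w)) : C = {f} :=
  (cycle_of_loop hC hfC hf).2

/-- A loop forms a cycle. -/
private lemma loop_isCycle {f : α} (hfE : f ∈ G.E) {w : V}
    (hf : G.ends f = s(w, w)) : G.IsCycle {f} := by
  have hwmem : w ∈ G.ends f := by rw [hf]; exact Sym2.mem_mk_left w w
  have hvtx : ∀ v, G.VIn {f} v → v = w := by
    rintro v ⟨g, hg, hvg⟩
    rw [Finset.mem_singleton] at hg
    subst hg
    rw [hf, Sym2.mem_iff] at hvg
    tauto
  refine ⟨⟨f, Finset.mem_singleton_self f⟩, by simpa using hfE, ?_, ?_⟩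
  · intro v hv
    have := hvtx v hv
    subst this
    unfold degIn
    rw [Finset.sum_singleton, if_pos hf]
  · intro u v hu hv
    rw [hvtx u hu, hvtx v hv]

/-- A cycle contained in a cycle is the whole cycle. -/
private lemma cycle_subset_cycle {C D : Finset α} (hC : G.IsCycle C)
    (hD : G.IsCycle D) (hsub : D ⊆ C) : D = C := by
  by_contra hne
  obtain ⟨f, hfC, hfD⟩ : ∃ f ∈ C, f ∉ D := by
    by_contra h
    push_neg at h
    exact hne (Finset.Subset.antisymm hsub h)
  -- a vertex of D is never on an edge of C \ D
  have hkey : ∀ v, G.VIn D v → ∀ g ∈ C, v ∈ G.ends g → g ∈ D := by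
    intro v hv g hgC hvg
    by_contra hgD
    have hdC : G.degIn C v = 2 := hC.2.2.1 v ⟨g, hgC, hvg⟩
    have hdD : G.degIn D v = 2 := hD.2.2.1 v hv
    unfold degIn at hdC hdD
    rw [← Finset.sum_sdiff hsub, hdD] at hdC
    have hz : ∀ x ∈ C \ D,
        (if G.ends x = s(v, v) then 2 else if v ∈ G.ends x then 1 else 0) = 0 := by
      rw [← Finset.sum_eq_zero_iff]
      omega
    exact term_eq_zero_iff.mp (hz g (Finset.mem_sdiff.mpr ⟨hgC, hgD⟩)) hvg
  -- vertices reachable (in C) from a vertex of D remain vertices of D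
  have hreach : ∀ u z, G.VIn D u → Relation.ReflTransGen (G.Adj C) u z → G.VIn D z := by
    intro u z hu hz
    induction hz with
    | refl => exact hu
    | tail h hadj ih =>
      obtain ⟨g, hgC, hg⟩ := hadj
      have hgD : g ∈ D := hkey _ ih g hgC (by rw [hg]; exact Sym2.mem_mk_left _ _)
      exact ⟨g, hgD, by rw [hg]; exact Sym2.mem_mk_right _ _⟩
  obtain ⟨d, hdD⟩ := hD.1
  obtain ⟨a, b, hab⟩ : ∃ a b, G.ends d = s(a, b) := by
    induction G.ends d using Sym2.ind with
    | _ a b => exact ⟨a, b, rfl⟩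
  obtain ⟨x, y, hxy⟩ : ∃ x y, G.ends f = s(x, y) := by
    induction G.ends f using Sym2.ind with
    | _ a b => exact ⟨a, b, rfl⟩
  have haD : G.VIn D a := ⟨d, hdD, by rw [hab]; exact Sym2.mem_mk_left _ _⟩
  have hax : Relation.ReflTransGen (G.Adj C) a x :=
    hC.2.2.2 a x ⟨d, hsub hdD, by rw [hab]; exact Sym2.mem_mk_left _ _⟩
      ⟨f, hfC, by rw [hxy]; exact Sym2.mem_mk_left _ _⟩
  have hxD : G.VIn D x := hreach a x haD hax
  exact hfD (hkey x hxD f hfC (by rw [hxy]; exact Sym2.mem_mk_left _ _))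

end MGraph

section MainProof

variable {V α : Type} [DecidableEq V] [DecidableEq α] {G : MGraph V α} {e : α}

private lemma delete_isCycle {X : Finset α} :
    (G.delete e).IsCycle X ↔ G.IsCycle X ∧ e ∉ X := by
  unfold MGraph.IsCycle MGraph.delete MGraph.VIn MGraph.degIn MGraph.Adj
  simp only [Finset.subset_erase]
  tauto

private lemma liftCircuit_insert (he : e ∈ G.E) {w : V} (hw : G.ends e = s(w, w))
    {D : Finset α} (hD : G.IsCycle D) (heD : e ∉ D) :
    G.LiftCircuit (insert e D) := by
  have hloopC : G.IsCycle {e} := MGraph.loop_isCycle he hw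
  refine ⟨?_, ⟨{e}, D, hloopC, hD, by simp, Finset.subset_insert _ _, ?_⟩, ?_⟩
  · exact Finset.insert_subset he hD.2.1
  · intro h
    exact heD (h ▸ Finset.mem_singleton_self e)
  · rintro Y hY ⟨C₁, C₂, hC₁, hC₂, hC₁Y, hC₂Y, hne⟩
    -- each Cᵢ is {e} or D
    have hcase : ∀ C : Finset α, G.IsCycle C → C ⊆ Y → C = {e} ∨ C = D := by
      intro C hC hCY
      by_cases heC : e ∈ C
      · exact Or.inl (MGraph.cycle_eq_loop hC heC hw)
      · refine Or.inr (MGraph.cycle_subset_cycle hD hC ?_)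
        intro x hx
        have := hCY.trans hY.1 hx
        rw [Finset.mem_insert] at this
        rcases this with rfl | h
        · exact absurd hx heC
        · exact h
    have h1 := hcase C₁ hC₁ hC₁Y
    have h2 := hcase C₂ hC₂ hC₂Y
    have hsub : insert e D ⊆ Y := by
      rcases h1 with rfl | rfl <;> rcases h2 with rfl | rfl
      · exact absurd rfl hne
      · exact Finset.insert_subset (hC₁Y (Finset.mem_singleton_self e)) hC₂Y
      · exact Finset.insert_subset (hC₂Y (Finset.mem_singleton_self e)) hC₁Y
      · exact absurd rfl hne
    exact (Finset.ssubset_iff_subset_ne.mp hY).2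
      (Finset.Subset.antisymm hY.1 hsub)

/-- Every lift circuit contains a cycle avoiding `e`. -/
private lemma liftCircuit_contains_cycle (hw : ∃ w, G.ends e = s(w, w))
    {C : Finset α} (hC : G.LiftCircuit C) :
    ∃ D : Finset α, G.IsCycle D ∧ e ∉ D ∧ D ⊆ C := by
  obtain ⟨w, hw⟩ := hw
  obtain ⟨C₁, C₂, hC₁, hC₂, hC₁C, hC₂C, hne⟩ := hC.2.1
  by_cases he1 : e ∈ C₁
  · have h1 : C₁ = {e} := MGraph.cycle_eq_loop hC₁ he1 hw
    by_cases he2 : e ∈ C₂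
    · exact absurd (h1.trans (MGraph.cycle_eq_loop hC₂ he2 hw).symm) hne
    · exact ⟨C₂, hC₂, he2, hC₂C⟩
  · exact ⟨C₁, hC₁, he1, hC₁C⟩

end MainProof

/-- for a loop `e` of `G`, `L(G)/e = M(G \ e)`: the circuits of the
contraction of `L(G)` by `e` are exactly the cycles of `G \ e`. -/
theorem lift_contract_loop_eq_graphic
    {V α : Type} [DecidableEq V] [DecidableEq α] (G : MGraph V α)
    (e : α) (he : e ∈ G.E) (hloop : (G.ends e).IsDiag) :
    ∀ X : Finset α,
      MGraph.ContractCircuit G.LiftCircuit e X ↔ (G.delete e).IsCycle X := by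
  obtain ⟨w, hw⟩ : ∃ w, G.ends e = s(w, w) := by
    obtain ⟨w, hwd⟩ := (show G.ends e ∈ Set.range Sym2.diag by rw [Sym2.range_diag]; exact hloop)
    exact ⟨w, hwd.symm⟩
  intro X
  rw [delete_isCycle]
  constructor
  · rintro ⟨⟨hXne, C, hC, rfl⟩, hmin⟩
    obtain ⟨D, hD, heD, hDC⟩ := liftCircuit_contains_cycle ⟨w, hw⟩ hC
    have hDX : D ⊆ C.erase e := fun x hx =>
      Finset.mem_erase.mpr ⟨fun hxe => heD (hxe ▸ hx), hDC hx⟩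
    have hform : D.Nonempty ∧ ∃ C' : Finset α, G.LiftCircuit C' ∧ D = C'.erase e := by
      refine ⟨hD.1, insert e D, liftCircuit_insert he hw hD heD, ?_⟩
      rw [Finset.erase_insert heD]
    have hDeq : D = C.erase e := by
      by_contra hne
      exact hmin D (Finset.ssubset_iff_subset_ne.mpr ⟨hDX, hne⟩) hform
    rw [← hDeq]
    exact ⟨hD, heD⟩
  · rintro ⟨hX, heX⟩
    refine ⟨⟨hX.1, insert e X, liftCircuit_insert he hw hX heX,
      (Finset.erase_insert heX).symm⟩, ?_⟩
    rintro Y hY ⟨hYne, C', hC', rfl⟩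
    obtain ⟨D, hD, heD, hDC⟩ := liftCircuit_contains_cycle ⟨w, hw⟩ hC'
    have hDY : D ⊆ C'.erase e := fun x hx =>
      Finset.mem_erase.mpr ⟨fun hxe => heD (hxe ▸ hx), hDC hx⟩
    have hDX : D ⊆ X := hDY.trans hY.1
    have := MGraph.cycle_subset_cycle hX hD hDX
    subst this
    exact (Finset.ssubset_iff_subset_ne.mp hY).2 (Finset.Subset.antisymm hY.1 hDY)
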